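/- Let A be a d×d matrix over ℝ ∪ {-∞} with a circuit in its graph. Then there exist an index k and a positive integer c ≤ d such that (A^{⊗c})_{kk} = c·ρ_max(A); consequently, for all n ≥ 1 and x ∈ ℝ^d, max_i (A^{⊗(nc)} x)_i ≥ n·c·ρ_max(A) + x_k. -/

import Mathlib

/-- The `(max,+)` matrix product over the semiring `(ℝ ∪ {-∞}, max, +)`. -/
def mpMul {d : ℕ} (A B : Fin d → Fin d → WithBot ℝ) : Fin d → Fin d → WithBot ℝ :=
  fun i j => Finset.univ.sup (fun p => A i p + B p j)

/-- The `n`-th `(max,+)` power of a matrix. -/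
def mpPow {d : ℕ} (A : Fin d → Fin d → WithBot ℝ) : ℕ → Fin d → Fin d → WithBot ℝ
  | 0 => fun i j => if i = j then (0 : WithBot ℝ) else ⊥
  | n + 1 => mpMul A (mpPow A n)

/-- `p : Fin (c+1) → Fin d` is an elementary circuit of the graph of `A`. -/
def IsElemCircuit {d : ℕ} (A : Fin d → Fin d → WithBot ℝ) (c : ℕ)
    (p : Fin (c + 1) → Fin d) : Prop :=
  0 < c ∧ p 0 = p (Fin.last c) ∧
  (∀ k : Fin c, A (p k.castSucc) (p k.succ) ≠ ⊥) ∧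
  Function.Injective (fun k : Fin c => p k.castSucc)

/-- The set of average weights of elementary circuits of `A`;
`ρ_max(A)` is its supremum. -/
def circuitAvgWeights {d : ℕ} (A : Fin d → Fin d → WithBot ℝ) : Set ℝ :=
  {r : ℝ | ∃ (c : ℕ) (p : Fin (c + 1) → Fin d), IsElemCircuit A c p ∧
    r = (∑ k : Fin c, WithBot.unbotD 0 (A (p k.castSucc) (p k.succ))) / c}

/- ---------- auxiliary lemmas ---------- -/

lemma wb_sum_eq_coe {α : Type*} {s : Finset α} {f : α → WithBot ℝ}
    (h : ∀ i ∈ s, f i ≠ ⊥) :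
    ∑ i ∈ s, f i = ((∑ i ∈ s, WithBot.unbotD 0 (f i) : ℝ) : WithBot ℝ) := by
  induction s using Finset.cons_induction with
  | empty => simp
  | cons a s ha ih =>
    rw [Finset.sum_cons, Finset.sum_cons,
      ih (fun i hi => h i (Finset.mem_cons_of_mem hi)), WithBot.coe_add]
    congr 1
    obtain ⟨r, hr⟩ := WithBot.ne_bot_iff_exists.mp (h a (Finset.mem_cons_self a s))
    simp [← hr]

lemma wb_sum_ne_bot {α : Type*} {s : Finset α} {f : α → WithBot ℝ}
    (h : ∑ i ∈ s, f i ≠ ⊥) : ∀ i ∈ s, f i ≠ ⊥ := by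
  induction s using Finset.cons_induction with
  | empty => simp
  | cons a s ha ih =>
    rw [Finset.sum_cons, Ne, WithBot.add_eq_bot] at h
    push_neg at h
    intro i hi
    rcases Finset.mem_cons.mp hi with rfl | hi
    · exact h.1
    · exact ih h.2 i hi

lemma walk_le_mpPow {d : ℕ} (A : Fin d → Fin d → WithBot ℝ) :
    ∀ (c : ℕ) (q : ℕ → Fin d),
      (∑ m ∈ Finset.range c, A (q m) (q (m + 1))) ≤ mpPow A c (q 0) (q c) := by
  intro c
  induction c with
  | zero => intro q; simp [mpPow]
  | succ c ih =>
    intro q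
    have h1 : A (q 0) (q 1) + mpPow A c (q 1) (q (c + 1)) ≤ mpPow A (c + 1) (q 0) (q (c + 1)) := by
      show _ ≤ mpMul A (mpPow A c) (q 0) (q (c + 1))
      exact Finset.le_sup (f := fun p => A (q 0) p + mpPow A c p (q (c + 1)))
        (Finset.mem_univ (q 1))
    refine le_trans ?_ h1
    have h2 := ih (fun n => q (n + 1))
    rw [Finset.sum_range_succ']
    calc ∑ m ∈ Finset.range c, A (q (m + 1)) (q (m + 1 + 1)) + A (q 0) (q 1)
        ≤ mpPow A c (q 1) (q (c + 1)) + A (q 0) (q 1) := add_le_add_left h2 _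
      _ = A (q 0) (q 1) + mpPow A c (q 1) (q (c + 1)) := add_comm _ _

lemma exists_walk_of_mpPow_ne_bot {d : ℕ} (A : Fin d → Fin d → WithBot ℝ) :
    ∀ (c : ℕ) (i j : Fin d), mpPow A c i j ≠ ⊥ →
      ∃ q : ℕ → Fin d, q 0 = i ∧ q c = j ∧
        mpPow A c i j = ∑ m ∈ Finset.range c, A (q m) (q (m + 1)) := by
  intro c
  induction c with
  | zero =>
    intro i j h
    simp only [mpPow] at h ⊢
    by_cases hij : i = j
    · exact ⟨fun _ => i, rfl, hij, by simp [hij]⟩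
    · simp [hij] at h
  | succ c ih =>
    intro i j h
    have : Nonempty (Fin d) := ⟨i⟩
    have hne : (Finset.univ : Finset (Fin d)).Nonempty := Finset.univ_nonempty
    obtain ⟨p, _, hp⟩ := Finset.exists_mem_eq_sup Finset.univ hne
      (fun p => A i p + mpPow A c p j)
    have hval : mpPow A (c + 1) i j = A i p + mpPow A c p j := hp
    rw [hval] at h
    rw [Ne, WithBot.add_eq_bot] at h
    push_neg at h
    obtain ⟨q', hq0, hqc, hqs⟩ := ih p j h.2
    refine ⟨fun n => if n = 0 then i else q' (n - 1), rfl, by simpa using hqc, ?_⟩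
    rw [hval, Finset.sum_range_succ']
    simp only [Nat.succ_ne_zero, if_false, Nat.add_sub_cancel, if_pos rfl]
    rw [add_comm, hqs, hq0]
    norm_num

lemma mpPow_supermul {d : ℕ} (A : Fin d → Fin d → WithBot ℝ) :
    ∀ (a b : ℕ) (i j k : Fin d),
      mpPow A a i k + mpPow A b k j ≤ mpPow A (a + b) i j := by
  intro a
  induction a with
  | zero =>
    intro b i j k
    by_cases hik : i = k
    · subst hik
      simp [mpPow, zero_add]
    · simp [mpPow, hik]
  | succ a ih =>
    intro b i j k
    rw [show a + 1 + b = (a + b) + 1 by omega]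
    show mpMul A (mpPow A a) i k + mpPow A b k j ≤ mpMul A (mpPow A (a + b)) i j
    by_cases hd : (Finset.univ : Finset (Fin d)).Nonempty
    · obtain ⟨p, _, hp⟩ := Finset.exists_mem_eq_sup Finset.univ hd
        (fun p => A i p + mpPow A a p k)
      unfold mpMul
      rw [hp]
      calc A i p + mpPow A a p k + mpPow A b k j
          ≤ A i p + mpPow A (a + b) p j := by
            rw [add_assoc]; exact add_le_add_right (ih b p j k) _
        _ ≤ _ := Finset.le_sup (f := fun p => A i p + mpPow A (a + b) p j)
            (Finset.mem_univ p)
    · rw [Finset.not_nonempty_iff_eq_empty] at hd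
      unfold mpMul
      simp [hd]

lemma circuitAvgWeights_finite {d : ℕ} (A : Fin d → Fin d → WithBot ℝ) :
    (circuitAvgWeights A).Finite := by
  have hsub : circuitAvgWeights A ⊆ Set.range
      (fun x : (Σ c : Fin (d + 1), (Fin ((c : ℕ) + 1) → Fin d)) =>
        (∑ k : Fin (x.1 : ℕ), WithBot.unbotD 0 (A (x.2 k.castSucc) (x.2 k.succ))) / ((x.1 : ℕ) : ℝ)) := by
    rintro r ⟨c, p, hp, rfl⟩
    have hcd : c ≤ d := by
      simpa using Fintype.card_le_of_injective _ hp.2.2.2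
    exact ⟨⟨⟨c, by omega⟩, p⟩, rfl⟩
  exact (Set.finite_range _).subset hsub

/-- any closed walk with non-bot arcs has average weight at most the max circuit mean -/
lemma closed_walk_bound {d : ℕ} (A : Fin d → Fin d → WithBot ℝ)
    (hbdd : BddAbove (circuitAvgWeights A)) :
    ∀ (c : ℕ) (q : ℕ → Fin d), (∀ m, m < c → A (q m) (q (m + 1)) ≠ ⊥) → q c = q 0 →
      ∑ m ∈ Finset.range c, WithBot.unbotD 0 (A (q m) (q (m + 1)))
        ≤ (c : ℝ) * sSup (circuitAvgWeights A) := by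
  intro c
  induction c using Nat.strong_induction_on with
  | _ c IH =>
  intro q harc hclosed
  classical
  rcases Nat.eq_zero_or_pos c with rfl | hc
  · simp
  set ρ := sSup (circuitAvgWeights A) with hρ
  have Hex : ∃ m, 0 < m ∧ ∃ i, i + m ≤ c ∧ q i = q (i + m) :=
    ⟨c, hc, 0, by simp, by simpa using hclosed.symm⟩
  set c' := Nat.find Hex with hc'def
  obtain ⟨hc'pos, i, hic, heq⟩ := Nat.find_spec Hex
  have hmin : ∀ m, m < c' → ¬(0 < m ∧ ∃ i, i + m ≤ c ∧ q i = q (i + m)) :=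
    fun m hm => Nat.find_min Hex hm
  -- the elementary circuit q i, q (i+1), ..., q (i+c')
  set p : Fin (c' + 1) → Fin d := fun t => q (i + (t : ℕ)) with hpdef
  have hpc : IsElemCircuit A c' p := by
    refine ⟨hc'pos, ?_, ?_, ?_⟩
    · simp only [hpdef, Fin.val_zero, Fin.val_last, Nat.add_zero]
      exact heq
    · intro t
      have ht : (t : ℕ) < c' := t.2
      have : i + (t : ℕ) + 1 ≤ c := by omega
      have h1 : A (p t.castSucc) (p t.succ) = A (q (i + (t : ℕ))) (q (i + (t : ℕ) + 1)) := by
        simp only [hpdef, Fin.coe_castSucc, Fin.val_succ]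
        congr 1
      rw [h1]
      exact harc _ (by omega)
    · intro a b hab
      simp only [hpdef, Fin.coe_castSucc] at hab
      by_contra hne
      have hne' : (a : ℕ) ≠ (b : ℕ) := fun h => hne (Fin.ext h)
      rcases Nat.lt_or_ge (a : ℕ) (b : ℕ) with h | h
      · refine hmin ((b : ℕ) - (a : ℕ)) (by have := b.2; omega)
          ⟨by omega, i + (a : ℕ), by have := b.2; omega, ?_⟩
        rw [show i + (a:ℕ) + ((b:ℕ) - (a:ℕ)) = i + (b:ℕ) by omega]
        exact hab
      · have h' : (b : ℕ) < (a : ℕ) := by omega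
        refine hmin ((a : ℕ) - (b : ℕ)) (by have := a.2; omega)
          ⟨by omega, i + (b : ℕ), by have := a.2; omega, ?_⟩
        rw [show i + (b:ℕ) + ((a:ℕ) - (b:ℕ)) = i + (a:ℕ) by omega]
        exact hab.symm
  -- average weight of this circuit is ≤ ρ
  have havg : (∑ t : Fin c', WithBot.unbotD 0 (A (p t.castSucc) (p t.succ))) / (c' : ℝ) ≤ ρ :=
    le_csSup hbdd ⟨c', p, hpc, rfl⟩
  have hmidsum : ∑ t : Fin c', WithBot.unbotD 0 (A (p t.castSucc) (p t.succ))
      = ∑ m ∈ Finset.Ico i (i + c'), WithBot.unbotD 0 (A (q m) (q (m + 1))) := by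
    rw [Finset.sum_Ico_eq_sum_range]
    simp only [Nat.add_sub_cancel_left]
    rw [← Fin.sum_univ_eq_sum_range (fun m => WithBot.unbotD 0 (A (q (i + m)) (q (i + m + 1)))) c']
    apply Finset.sum_congr rfl
    intro t _
    simp only [hpdef, Fin.coe_castSucc, Fin.val_succ]
    congr 2
  have hmid : ∑ m ∈ Finset.Ico i (i + c'), WithBot.unbotD 0 (A (q m) (q (m + 1))) ≤ (c' : ℝ) * ρ := by
    rw [← hmidsum]
    have hc'ne : ((c' : ℝ)) ≠ 0 := by positivity
    calc ∑ t : Fin c', WithBot.unbotD 0 (A (p t.castSucc) (p t.succ))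
        = (c' : ℝ) * ((∑ t : Fin c', WithBot.unbotD 0 (A (p t.castSucc) (p t.succ))) / (c' : ℝ)) := by
          field_simp
      _ ≤ (c' : ℝ) * ρ := by
          apply mul_le_mul_of_nonneg_left havg (by positivity)
  -- the reduced walk
  set q' : ℕ → Fin d := fun n => if n < i then q n else q (n + c') with hq'def
  have hq'lo : ∀ n, n ≤ i → q' n = q n := by
    intro n hn
    rcases eq_or_lt_of_le hn with rfl | h
    · simp only [hq'def, lt_irrefl, if_false]
      exact heq.symm
    · simp [hq'def, h]
  have hq'hi : ∀ n, i ≤ n → q' n = q (n + c') := by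
    intro n hn
    simp [hq'def, Nat.not_lt.mpr hn]
  have hicc : i ≤ c - c' := by omega
  have hq'closed : q' (c - c') = q' 0 := by
    rw [hq'hi _ hicc, hq'lo 0 (Nat.zero_le _), show c - c' + c' = c by omega, hclosed]
  have hq'arc : ∀ m, m < c - c' → A (q' m) (q' (m + 1)) ≠ ⊥ := by
    intro m hm
    rcases Nat.lt_or_ge m i with h | h
    · rw [hq'lo m (le_of_lt h), hq'lo (m + 1) (by omega)]
      exact harc m (by omega)
    · rw [hq'hi m h, hq'hi (m + 1) (by omega), show m + 1 + c' = m + c' + 1 by omega]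
      exact harc (m + c') (by omega)
  have hq'sum : ∑ m ∈ Finset.range (c - c'), WithBot.unbotD 0 (A (q' m) (q' (m + 1)))
      = ∑ m ∈ Finset.Ico 0 i, WithBot.unbotD 0 (A (q m) (q (m + 1)))
        + ∑ m ∈ Finset.Ico (i + c') c, WithBot.unbotD 0 (A (q m) (q (m + 1))) := by
    rw [Finset.range_eq_Ico, ← Finset.sum_Ico_consecutive _ (Nat.zero_le i) hicc]
    congr 1
    · apply Finset.sum_congr rfl
      intro m hm
      rw [Finset.mem_Ico] at hm
      rw [hq'lo m (le_of_lt hm.2), hq'lo (m + 1) hm.2]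
    · rw [Finset.sum_Ico_eq_sum_range, Finset.sum_Ico_eq_sum_range,
        show c - (i + c') = c - c' - i by omega]
      apply Finset.sum_congr rfl
      intro m hm
      rw [Finset.mem_range] at hm
      rw [hq'hi (i + m) (by omega), hq'hi (i + m + 1) (by omega),
        show i + m + c' = i + c' + m by omega, show i + m + 1 + c' = i + c' + m + 1 by omega]
  have hIH : ∑ m ∈ Finset.range (c - c'), WithBot.unbotD 0 (A (q' m) (q' (m + 1)))
      ≤ ((c - c' : ℕ) : ℝ) * ρ := IH (c - c') (by omega) q' hq'arc hq'closed
  have hsplit : ∑ m ∈ Finset.range c, WithBot.unbotD 0 (A (q m) (q (m + 1)))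
      = ∑ m ∈ Finset.Ico 0 i, WithBot.unbotD 0 (A (q m) (q (m + 1)))
        + ∑ m ∈ Finset.Ico i (i + c'), WithBot.unbotD 0 (A (q m) (q (m + 1)))
        + ∑ m ∈ Finset.Ico (i + c') c, WithBot.unbotD 0 (A (q m) (q (m + 1))) := by
    rw [Finset.range_eq_Ico,
      ← Finset.sum_Ico_consecutive _ (Nat.zero_le (i + c')) (show i + c' ≤ c from hic),
      ← Finset.sum_Ico_consecutive _ (Nat.zero_le i) (Nat.le_add_right i c')]
  rw [hsplit]
  have : ((c : ℕ) : ℝ) * ρ = ((c - c' : ℕ) : ℝ) * ρ + (c' : ℝ) * ρ := by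
    rw [← add_mul]
    congr 1
    push_cast [Nat.cast_sub (show c' ≤ c by omega)]
    ring
  rw [this]
  calc ∑ m ∈ Finset.Ico 0 i, WithBot.unbotD 0 (A (q m) (q (m + 1)))
        + ∑ m ∈ Finset.Ico i (i + c'), WithBot.unbotD 0 (A (q m) (q (m + 1)))
        + ∑ m ∈ Finset.Ico (i + c') c, WithBot.unbotD 0 (A (q m) (q (m + 1)))
      = (∑ m ∈ Finset.Ico 0 i, WithBot.unbotD 0 (A (q m) (q (m + 1)))
        + ∑ m ∈ Finset.Ico (i + c') c, WithBot.unbotD 0 (A (q m) (q (m + 1))))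
        + ∑ m ∈ Finset.Ico i (i + c'), WithBot.unbotD 0 (A (q m) (q (m + 1))) := by ring
    _ ≤ ((c - c' : ℕ) : ℝ) * ρ + (c' : ℝ) * ρ := by
        apply add_le_add _ hmid
        rw [← hq'sum]; exact hIH

/-- If the graph of `A` has a circuit, then there are a node `k` and `0 < c ≤ d` with
`(A^{⊗c})_{kk} = c·ρ_max(A)`, whence for all `n ≥ 1` and `x ∈ ℝ^d`,
`max_i (A^{⊗(nc)} x)_i ≥ n·c·ρ_max(A) + x_k`. -/
theorem mpPow_apply_max_lower_bound {d : ℕ}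
    (A : Fin d → Fin d → WithBot ℝ)
    (hcirc : ∃ (c : ℕ) (p : Fin (c + 1) → Fin d), IsElemCircuit A c p) :
    ∃ (k : Fin d) (c : ℕ), 0 < c ∧ c ≤ d ∧
      mpPow A c k k = (((c : ℝ) * sSup (circuitAvgWeights A) : ℝ) : WithBot ℝ) ∧
      ∀ n : ℕ, 1 ≤ n → ∀ x : Fin d → ℝ,
        ((((n * c : ℕ) : ℝ) * sSup (circuitAvgWeights A) + x k : ℝ) : WithBot ℝ) ≤
          Finset.univ.sup (fun i =>
            Finset.univ.sup (fun j => mpPow A (n * c) i j + (x j : WithBot ℝ))) := by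
  classical
  obtain ⟨c₁, p₁, hp₁⟩ := hcirc
  have hdpos : Nonempty (Fin d) := ⟨p₁ 0⟩
  have hfin := circuitAvgWeights_finite A
  have hne : (circuitAvgWeights A).Nonempty := ⟨_, c₁, p₁, hp₁, rfl⟩
  have hbdd : BddAbove (circuitAvgWeights A) := hfin.bddAbove
  set ρ := sSup (circuitAvgWeights A) with hρ
  obtain ⟨c₀, p₀, hp₀, hval⟩ := hne.csSup_mem hfin
  set k := p₀ 0 with hk
  have hc₀ : 0 < c₀ := hp₀.1
  have hcd : c₀ ≤ d := by simpa using Fintype.card_le_of_injective _ hp₀.2.2.2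
  set S := ∑ t : Fin c₀, WithBot.unbotD 0 (A (p₀ t.castSucc) (p₀ t.succ)) with hS
  have hc₀ne : ((c₀ : ℝ)) ≠ 0 := by positivity
  have hSval : S = (c₀ : ℝ) * ρ := by
    rw [show ρ = S / (c₀ : ℝ) from hval]
    field_simp
  -- the walk following the circuit
  set q : ℕ → Fin d := fun n => p₀ ⟨min n c₀, Nat.lt_succ_of_le (Nat.min_le_right n c₀)⟩
    with hq
  have hq0 : q 0 = k := by
    simp only [hq, hk]
    congr 1
  have hqc : q c₀ = k := by
    simp only [hq, hk]
    rw [hp₀.2.1]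
    congr 1
    exact Fin.ext (by simp [Fin.val_last])
  have harcs : ∀ t : Fin c₀, A (q (t : ℕ)) (q ((t : ℕ) + 1)) = A (p₀ t.castSucc) (p₀ t.succ) := by
    intro t
    have h1 : q (t : ℕ) = p₀ t.castSucc := by
      simp only [hq]
      congr 1
      exact Fin.ext (by simp [Nat.min_eq_left (le_of_lt t.2)])
    have h2 : q ((t : ℕ) + 1) = p₀ t.succ := by
      simp only [hq]
      congr 1
      exact Fin.ext (by simp [Nat.min_eq_left t.2])
    rw [h1, h2]
  have hwsum : ∑ m ∈ Finset.range c₀, A (q m) (q (m + 1))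
      = ∑ t : Fin c₀, A (p₀ t.castSucc) (p₀ t.succ) := by
    rw [← Fin.sum_univ_eq_sum_range (fun m => A (q m) (q (m + 1))) c₀]
    exact Finset.sum_congr rfl (fun t _ => harcs t)
  have hcoe : ∑ t : Fin c₀, A (p₀ t.castSucc) (p₀ t.succ) = ((S : ℝ) : WithBot ℝ) :=
    wb_sum_eq_coe (fun t _ => hp₀.2.2.1 t)
  have hlow : (((c₀ : ℝ) * ρ : ℝ) : WithBot ℝ) ≤ mpPow A c₀ k k := by
    have h := walk_le_mpPow A c₀ q
    rw [hq0, hqc, hwsum, hcoe, hSval] at h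
    exact h
  have hupp : mpPow A c₀ k k ≤ (((c₀ : ℝ) * ρ : ℝ) : WithBot ℝ) := by
    by_cases hb : mpPow A c₀ k k = ⊥
    · rw [hb]; exact bot_le
    · obtain ⟨w, hw0, hwc, hwe⟩ := exists_walk_of_mpPow_ne_bot A c₀ k k hb
      have hwne : ∀ m ∈ Finset.range c₀, A (w m) (w (m + 1)) ≠ ⊥ :=
        wb_sum_ne_bot (by rw [← hwe]; exact hb)
      rw [hwe, wb_sum_eq_coe hwne, WithBot.coe_le_coe]
      exact closed_walk_bound A hbdd c₀ w
        (fun m hm => hwne m (Finset.mem_range.mpr hm)) (hwc.trans hw0.symm)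
  have heq : mpPow A c₀ k k = (((c₀ : ℝ) * ρ : ℝ) : WithBot ℝ) := le_antisymm hupp hlow
  have hpowb : ∀ n : ℕ, ((((n * c₀ : ℕ) : ℝ) * ρ : ℝ) : WithBot ℝ) ≤ mpPow A (n * c₀) k k := by
    intro n
    induction n with
    | zero => simp [mpPow]
    | succ n ih =>
      have hstep : mpPow A (n * c₀) k k + mpPow A c₀ k k ≤ mpPow A ((n + 1) * c₀) k k := by
        rw [show (n + 1) * c₀ = n * c₀ + c₀ by ring]
        exact mpPow_supermul A (n * c₀) c₀ k k k
      refine le_trans ?_ hstep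
      rw [heq]
      have hcast : (((n + 1) * c₀ : ℕ) : ℝ) * ρ = ((n * c₀ : ℕ) : ℝ) * ρ + (c₀ : ℝ) * ρ := by
        push_cast
        ring
      rw [hcast, WithBot.coe_add]
      exact add_le_add_left ih _
  refine ⟨k, c₀, hc₀, hcd, heq, ?_⟩
  intro n hn x
  calc ((((n * c₀ : ℕ) : ℝ) * ρ + x k : ℝ) : WithBot ℝ)
      = ((((n * c₀ : ℕ) : ℝ) * ρ : ℝ) : WithBot ℝ) + ((x k : ℝ) : WithBot ℝ) := WithBot.coe_add _ _
    _ ≤ mpPow A (n * c₀) k k + ((x k : ℝ) : WithBot ℝ) := add_le_add_left (hpowb n) _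
    _ ≤ Finset.univ.sup (fun j => mpPow A (n * c₀) k j + ((x j : ℝ) : WithBot ℝ)) :=
        Finset.le_sup (f := fun j => mpPow A (n * c₀) k j + ((x j : ℝ) : WithBot ℝ))
          (Finset.mem_univ k)
    _ ≤ _ := Finset.le_sup
          (f := fun i => Finset.univ.sup (fun j => mpPow A (n * c₀) i j + ((x j : ℝ) : WithBot ℝ)))
          (Finset.mem_univ k)
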